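/- arXiv:1906.03315 — 2 statements merged into one kernel-verified Lean document; each statement's English description precedes it below -/
import Mathlib

section
/- Let k, r be nonnegative integers with n = k + r and let a = (a_1,…,a_r) be an arbitrary sequence of r nonnegative integers. Then for every integer d with n − k < d ≤ n, the elementary symmetric polynomial e_d(x_1,…,x_n) annihilates the a-superspace Vandermonde; that is, ∂(e_d)(Δ_n(a)) = 0 in superspace. -/
open MvPolynomial

/-- Superspace of rank `n`: elements are represented by their coefficients on the
basis of `θ`-monomials `θ_S` (for `S` a subset of `Fin n`, with factors in increasing order),
with coefficients in the polynomial ring `ℚ[x_1, …, x_n]`. -/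
abbrev Superspace (n : ℕ) := Finset (Fin n) → MvPolynomial (Fin n) ℚ

/-- The partial derivative `∂_i` with respect to the commuting variable `x_i`,
treating the `θ`-variables as constants. -/
noncomputable def xDeriv {n : ℕ} (i : Fin n) (F : Superspace n) : Superspace n :=
  fun S => MvPolynomial.pderiv i (F S)

/-- The partial derivative `∂_i^θ` with respect to the anticommuting variable `θ_i`:
it is `ℚ[x]`-linear and sends `θ_{j_1} ⋯ θ_{j_r}` (with `j_1 < ⋯ < j_r`) to
`(-1)^{s-1} θ_{j_1} ⋯ ω(θ_{j_s}) ⋯ θ_{j_r}` if `j_s = i`, and to `0` if `i` does not occur. -/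
noncomputable def thetaDeriv {n : ℕ} (i : Fin n) (F : Superspace n) : Superspace n :=
  fun S => if i ∈ S then 0
    else ((-1 : ℚ) ^ (S.filter (fun j => j < i)).card) • F (insert i S)

/-- The differential operator `∂(p)` (replace each `x_i` in `p` by `∂_i`) applied to `q`. -/
noncomputable def diffOp {n : ℕ} (p q : MvPolynomial (Fin n) ℚ) : MvPolynomial (Fin n) ℚ :=
  ∑ a ∈ p.support, ∑ b ∈ q.support,
    (p.coeff a * q.coeff b * ∏ i : Fin n, ((b i).descFactorial (a i) : ℚ)) •
      MvPolynomial.monomial (b - a) (1 : ℚ)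

/-- The action of the polynomial ring `ℚ[x_1, …, x_n]` on superspace, `f · g := ∂(f)(g)`. -/
noncomputable def pAct {n : ℕ} (p : MvPolynomial (Fin n) ℚ) (F : Superspace n) : Superspace n :=
  fun S => diffOp p (F S)

/-- Iterated `θ`-derivative along a list (leftmost applied last). -/
noncomputable def thetaDerivList {n : ℕ} (l : List (Fin n)) (F : Superspace n) : Superspace n :=
  l.foldr thetaDeriv F

/-- The action of superspace on itself, `f · g := ∂(f)(g)`, where `∂(f)` is obtained
from `f` by replacing every `x_i` by `∂_i` and every `θ_i` by `∂_i^θ`. -/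
noncomputable def superAct {n : ℕ} (f g : Superspace n) : Superspace n :=
  ∑ T : Finset (Fin n), (fun S => diffOp (f T) (thetaDerivList (T.sort (· ≤ ·)) g S))

/-- The diagonal action of a permutation `w` on superspace:
`w · x_i = x_{w(i)}` and `w · θ_i = θ_{w(i)}`. -/
noncomputable def permAct {n : ℕ} (w : Equiv.Perm (Fin n)) (F : Superspace n) : Superspace n :=
  fun S =>
    ((-1 : ℚ) ^ (((S.image w.symm) ×ˢ (S.image w.symm)).filter
        (fun p => p.1 < p.2 ∧ w p.2 < w p.1)).card) •
      MvPolynomial.rename w (F (S.image w.symm))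

/-- The supermonomial `x^a · θ_T`. -/
noncomputable def sMono {n : ℕ} (a : Fin n →₀ ℕ) (T : Finset (Fin n)) : Superspace n :=
  fun S => if S = T then MvPolynomial.monomial a (1 : ℚ) else 0

/-- The `a`-superspace Vandermonde
`Δ_n(a) = ε_n · (x_1^{a_1} ⋯ x_r^{a_r} x_{r+1}^{k-1} ⋯ x_n^0 · θ_1 ⋯ θ_r)` (with `n = k + r`). -/
noncomputable def superVandermonde (n r : ℕ) (a : Fin r → ℕ) : Superspace n :=
  ∑ w : Equiv.Perm (Fin n),
    ((Equiv.Perm.sign w : ℤ) : ℚ) •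
      permAct w (sMono
        (Finsupp.equivFunOnFinite.symm
          (fun i : Fin n => if h : (i : ℕ) < r then a ⟨(i : ℕ), h⟩ else n - 1 - (i : ℕ)))
        (Finset.univ.filter (fun i : Fin n => (i : ℕ) < r)))

/-- Multiplication in superspace (the `θ`-variables anticommute). -/
noncomputable def superMul {n : ℕ} (F G : Superspace n) : Superspace n :=
  fun S => ∑ T ∈ S.powerset,
    ((-1 : ℚ) ^ ((T ×ˢ (S \ T)).filter (fun p => p.2 < p.1)).card) • (F T * G (S \ T))

/-- The bilinear form `⟨f, g⟩` = constant term of `∂(f)(g)`. -/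
noncomputable def superPairing {n : ℕ} (f g : Superspace n) : ℚ :=
  MvPolynomial.constantCoeff (superAct f g ∅)

/-- `V_n(a)`: the smallest subspace of superspace containing `Δ_n(a)` which is closed
under the partial derivatives `∂_1, …, ∂_n`. -/
noncomputable def Vspace (n r : ℕ) (a : Fin r → ℕ) : Submodule ℚ (Superspace n) :=
  sInf {W : Submodule ℚ (Superspace n) |
    superVandermonde n r a ∈ W ∧ ∀ i : Fin n, ∀ F ∈ W, xDeriv i F ∈ W}

/-- `W_n(a)`: the smallest subspace of superspace containing `Δ_n(a)` which is closed
under `∂_1, …, ∂_n` and `∂_1^θ, …, ∂_n^θ`. -/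
noncomputable def Wspace (n r : ℕ) (a : Fin r → ℕ) : Submodule ℚ (Superspace n) :=
  sInf {W : Submodule ℚ (Superspace n) |
    superVandermonde n r a ∈ W ∧ (∀ i : Fin n, ∀ F ∈ W, xDeriv i F ∈ W) ∧
      (∀ i : Fin n, ∀ F ∈ W, thetaDeriv i F ∈ W)}

/-- A superpolynomial is `θ`-homogeneous of `θ`-degree `r`. -/
def isThetaHomog {n : ℕ} (r : ℕ) (F : Superspace n) : Prop :=
  ∀ S : Finset (Fin n), S.card ≠ r → F S = 0

/-- An `(n,k,s)`-staircase: a shuffle of `(s-1, …, s-1)` (`n-k` copies) with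
`(k-1, k-2, …, 1, 0)`; `T` records the positions of the decreasing staircase part. -/
def isStaircase3 (n k s : ℕ) (b : Fin n → ℕ) : Prop :=
  ∃ T : Finset (Fin n), T.card = k ∧
    ∀ i : Fin n, b i = if i ∈ T then k - 1 - (T.filter (fun j => j < i)).card else s - 1

/-- `(n,k,s)`-substaircase sequences: componentwise `≤` at least one `(n,k,s)`-staircase. -/
def isSubstaircase3 (n k s : ℕ) (c : Fin n → ℕ) : Prop :=
  ∃ b : Fin n → ℕ, isStaircase3 n k s b ∧ ∀ i, c i ≤ b i

/-- The (signless) Stirling numbers of the second kind. -/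
def stirling2 : ℕ → ℕ → ℕ
  | 0, 0 => 1
  | 0, _ + 1 => 0
  | _ + 1, 0 => 0
  | n + 1, k + 1 => stirling2 n k + (k + 1) * stirling2 n (k + 1)

/-- The ideal `I_{n,k,s} = ⟨x_1^s, …, x_n^s, e_n, e_{n-1}, …, e_{n-k+1}⟩`. -/
noncomputable def Inks (n k s : ℕ) : Ideal (MvPolynomial (Fin n) ℚ) :=
  Ideal.span ((Set.range fun i : Fin n => (MvPolynomial.X i : MvPolynomial (Fin n) ℚ) ^ s) ∪
    ((fun d => MvPolynomial.esymm (Fin n) ℚ d) '' {d : ℕ | n - k < d ∧ d ≤ n}))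

/-- The `q`-number `[m]_q = 1 + q + ⋯ + q^{m-1}`. -/
noncomputable def qNum (m : ℕ) : Polynomial ℕ := ∑ i ∈ Finset.range m, Polynomial.X ^ i

/-- The `q`-factorial `[k]!_q`. -/
noncomputable def qFactorial : ℕ → Polynomial ℕ
  | 0 => 1
  | m + 1 => qNum (m + 1) * qFactorial m

/-- The `q`-Stirling numbers `Stir_q(n,k)`. -/
noncomputable def qStirling : ℕ → ℕ → Polynomial ℕ
  | 0, 0 => 1
  | 0, _ + 1 => 0
  | _ + 1, 0 => 0
  | n + 1, k + 1 => qStirling n k + qNum (k + 1) * qStirling n (k + 1)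

/-- The submodule of superspace of `x`-homogeneous elements of `x`-degree `d`. -/
noncomputable def xHomogSub (n d : ℕ) : Submodule ℚ (Superspace n) :=
  Submodule.pi Set.univ
    (fun _ : Finset (Fin n) => MvPolynomial.homogeneousSubmodule (Fin n) ℚ d)

/-- The submodule of superspace of `θ`-homogeneous elements of `θ`-degree `j`. -/
noncomputable def thetaHomogSub (n j : ℕ) : Submodule ℚ (Superspace n) where
  carrier := {F | ∀ S : Finset (Fin n), S.card ≠ j → F S = 0}
  add_mem' := by
    intro F G hF hG S hS
    show F S + G S = 0
    rw [hF S hS, hG S hS, add_zero]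
  zero_mem' := by intro S _; rfl
  smul_mem' := by
    intro c F hF S hS
    show c • F S = 0
    rw [hF S hS, smul_zero]

namespace SuperVanAux

open Finset MvPolynomial

variable {n r d : ℕ}

/-- positions `< r` -/
def T0 (n r : ℕ) : Finset (Fin n) := Finset.univ.filter (fun i : Fin n => (i : ℕ) < r)

lemma mem_T0 {x : Fin n} : x ∈ T0 n r ↔ (x : ℕ) < r := by simp [T0]

/-- exponent finsupp of the base supermonomial -/
noncomputable def alpha (n r : ℕ) (a : Fin r → ℕ) : Fin n →₀ ℕ :=
  Finsupp.equivFunOnFinite.symm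
    (fun i : Fin n => if h : (i : ℕ) < r then a ⟨(i : ℕ), h⟩ else n - 1 - (i : ℕ))

lemma alpha_apply (a : Fin r → ℕ) (i : Fin n) :
    alpha n r a i = if h : (i : ℕ) < r then a ⟨(i : ℕ), h⟩ else n - 1 - (i : ℕ) := by
  simp [alpha]

/-- indicator finsupp of a finset -/
noncomputable def AS (S : Finset (Fin n)) : Fin n →₀ ℕ := ∑ i ∈ S, Finsupp.single i 1

lemma AS_apply (S : Finset (Fin n)) (i : Fin n) : AS S i = if i ∈ S then 1 else 0 := by
  classical
  rw [AS, Finset.sum_apply']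
  simp [Finsupp.single_apply]

lemma prod_X_eq (S : Finset (Fin n)) :
    (∏ i ∈ S, (MvPolynomial.X i : MvPolynomial (Fin n) ℚ)) = monomial (AS S) 1 := by
  classical
  induction S using Finset.cons_induction with
  | empty => simp [AS]
  | cons j S hj ih =>
      have hcons : AS (Finset.cons j S hj) = Finsupp.single j 1 + AS S := Finset.sum_cons hj
      rw [Finset.prod_cons, ih, hcons, MvPolynomial.X, MvPolynomial.monomial_mul, mul_one]

lemma diffOp_eq_sum (p q : MvPolynomial (Fin n) ℚ) {P Q : Finset (Fin n →₀ ℕ)}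
    (hP : p.support ⊆ P) (hQ : q.support ⊆ Q) :
    diffOp p q = ∑ a ∈ P, ∑ b ∈ Q,
      (p.coeff a * q.coeff b * ∏ i : Fin n, ((b i).descFactorial (a i) : ℚ)) •
        MvPolynomial.monomial (b - a) (1 : ℚ) := by
  rw [diffOp]
  rw [Finset.sum_subset hP (fun a _ ha => Finset.sum_eq_zero fun b _ => by
    rw [MvPolynomial.notMem_support_iff.mp ha]; simp)]
  exact Finset.sum_congr rfl fun a _ => Finset.sum_subset hQ (fun b _ hb => by
    rw [MvPolynomial.notMem_support_iff.mp hb]; simp)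

lemma diffOp_zero_right (p : MvPolynomial (Fin n) ℚ) : diffOp p 0 = 0 := by
  rw [diffOp]; simp

lemma diffOp_add_right (p q₁ q₂ : MvPolynomial (Fin n) ℚ) :
    diffOp p (q₁ + q₂) = diffOp p q₁ + diffOp p q₂ := by
  classical
  rw [diffOp_eq_sum p (q₁ + q₂) (subset_refl _) MvPolynomial.support_add,
      diffOp_eq_sum p q₁ (subset_refl _) Finset.subset_union_left,
      diffOp_eq_sum p q₂ (subset_refl _) Finset.subset_union_right,
      ← Finset.sum_add_distrib]
  refine Finset.sum_congr rfl fun a _ => ?_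
  rw [← Finset.sum_add_distrib]
  refine Finset.sum_congr rfl fun b _ => ?_
  rw [MvPolynomial.coeff_add, mul_add, add_mul, add_smul]

lemma diffOp_add_left (p₁ p₂ q : MvPolynomial (Fin n) ℚ) :
    diffOp (p₁ + p₂) q = diffOp p₁ q + diffOp p₂ q := by
  classical
  rw [diffOp_eq_sum (p₁ + p₂) q MvPolynomial.support_add (subset_refl _),
      diffOp_eq_sum p₁ q Finset.subset_union_left (subset_refl _),
      diffOp_eq_sum p₂ q Finset.subset_union_right (subset_refl _),
      ← Finset.sum_add_distrib]
  refine Finset.sum_congr rfl fun a _ => ?_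
  rw [← Finset.sum_add_distrib]
  refine Finset.sum_congr rfl fun b _ => ?_
  rw [MvPolynomial.coeff_add, add_mul, add_mul, add_smul]

lemma diffOp_smul_right (p : MvPolynomial (Fin n) ℚ) (c : ℚ) (q : MvPolynomial (Fin n) ℚ) :
    diffOp p (c • q) = c • diffOp p q := by
  classical
  rw [diffOp_eq_sum p (c • q) (subset_refl _) MvPolynomial.support_smul,
      diffOp_eq_sum p q (subset_refl _) (subset_refl _), Finset.smul_sum]
  refine Finset.sum_congr rfl fun a _ => ?_
  rw [Finset.smul_sum]
  refine Finset.sum_congr rfl fun b _ => ?_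
  rw [MvPolynomial.coeff_smul, smul_smul]
  congr 1
  simp only [smul_eq_mul]
  ring

lemma diffOp_sum_right {ι : Type*} (p : MvPolynomial (Fin n) ℚ) (s : Finset ι)
    (f : ι → MvPolynomial (Fin n) ℚ) :
    diffOp p (∑ i ∈ s, f i) = ∑ i ∈ s, diffOp p (f i) := by
  classical
  induction s using Finset.cons_induction with
  | empty => simpa using diffOp_zero_right p
  | cons j s hj ih => rw [Finset.sum_cons, diffOp_add_right, ih, Finset.sum_cons]

lemma diffOp_sum_left {ι : Type*} (s : Finset ι) (f : ι → MvPolynomial (Fin n) ℚ)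
    (q : MvPolynomial (Fin n) ℚ) :
    diffOp (∑ i ∈ s, f i) q = ∑ i ∈ s, diffOp (f i) q := by
  classical
  induction s using Finset.cons_induction with
  | empty => simp [diffOp]
  | cons j s hj ih => rw [Finset.sum_cons, diffOp_add_left, ih, Finset.sum_cons]

lemma diffOp_monomial_monomial (A B : Fin n →₀ ℕ) :
    diffOp (monomial A (1 : ℚ)) (monomial B (1 : ℚ)) =
      (∏ i : Fin n, ((B i).descFactorial (A i) : ℚ)) • monomial (B - A) (1 : ℚ) := by
  classical
  rw [diffOp]
  rw [MvPolynomial.support_monomial, MvPolynomial.support_monomial]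
  simp [MvPolynomial.coeff_monomial]

lemma diffOp_esymm (q : MvPolynomial (Fin n) ℚ) :
    diffOp (MvPolynomial.esymm (Fin n) ℚ d) q =
      ∑ S ∈ Finset.powersetCard d Finset.univ, diffOp (monomial (AS S) 1) q := by
  rw [MvPolynomial.esymm, diffOp_sum_left]
  exact Finset.sum_congr rfl fun S _ => by rw [prod_X_eq]

lemma image_symm_image (w : Equiv.Perm (Fin n)) (S : Finset (Fin n)) :
    (S.image ⇑w.symm).image ⇑w = S := by
  classical
  ext x
  constructor
  · intro hx
    rcases Finset.mem_image.mp hx with ⟨y, hy, rfl⟩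
    rcases Finset.mem_image.mp hy with ⟨z, hz, rfl⟩
    simpa using hz
  · intro hx
    exact Finset.mem_image.mpr ⟨w.symm x, Finset.mem_image.mpr ⟨x, hx, rfl⟩, by simp⟩

lemma sum_powersetCard_image {M : Type*} [AddCommMonoid M] (d : ℕ) (w : Equiv.Perm (Fin n))
    (F : Finset (Fin n) → M) :
    ∑ S ∈ Finset.powersetCard d (Finset.univ : Finset (Fin n)), F S =
      ∑ S ∈ Finset.powersetCard d (Finset.univ : Finset (Fin n)), F (S.image ⇑w) := by
  classical
  refine Finset.sum_bij' (fun S _ => S.image ⇑w.symm) (fun S _ => S.image ⇑w)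
    (fun S hS => ?_) (fun S hS => ?_) (fun S hS => ?_) (fun S hS => ?_) (fun S hS => ?_)
  · rw [Finset.mem_powersetCard_univ] at hS ⊢
    rw [Finset.card_image_of_injective _ (Equiv.injective _), hS]
  · rw [Finset.mem_powersetCard_univ] at hS ⊢
    rw [Finset.card_image_of_injective _ (Equiv.injective _), hS]
  · exact image_symm_image w S
  · have := image_symm_image w.symm S
    simpa using this
  · rw [image_symm_image]

lemma AS_image (w : Equiv.Perm (Fin n)) (S : Finset (Fin n)) :
    AS (S.image ⇑w) = Finsupp.mapDomain ⇑w (AS S) := by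
  classical
  ext i
  rw [Finsupp.mapDomain_equiv_apply, AS_apply, AS_apply]
  refine if_congr ?_ rfl rfl
  constructor
  · intro h
    rcases Finset.mem_image.mp h with ⟨x, hx, rfl⟩
    rwa [Equiv.symm_apply_apply]
  · intro h
    exact Finset.mem_image.mpr ⟨_, h, Equiv.apply_symm_apply _ _⟩

lemma prod_desc_mapDomain (w : Equiv.Perm (Fin n)) (B A : Fin n →₀ ℕ) :
    (∏ i : Fin n, (((Finsupp.mapDomain ⇑w B) i).descFactorial
        ((Finsupp.mapDomain ⇑w A) i) : ℚ)) =
      ∏ i : Fin n, ((B i).descFactorial (A i) : ℚ) := by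
  refine (Fintype.prod_equiv w _ _ fun i => ?_).symm
  simp [Finsupp.mapDomain_equiv_apply]

lemma mapDomain_tsub (w : Equiv.Perm (Fin n)) (B A : Fin n →₀ ℕ) :
    Finsupp.mapDomain ⇑w B - Finsupp.mapDomain ⇑w A = Finsupp.mapDomain ⇑w (B - A) := by
  ext i
  simp [Finsupp.tsub_apply, Finsupp.mapDomain_equiv_apply]

lemma vandermonde_apply (n r : ℕ) (a : Fin r → ℕ) (U : Finset (Fin n)) :
    superVandermonde n r a U =
      ∑ w : Equiv.Perm (Fin n),
        ((Equiv.Perm.sign w : ℤ) : ℚ) •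
          (if U.image ⇑w.symm = T0 n r then
            ((-1 : ℚ) ^ (((T0 n r ×ˢ T0 n r).filter
                (fun p => p.1 < p.2 ∧ w p.2 < w p.1)).card)) •
              MvPolynomial.monomial (Finsupp.mapDomain ⇑w (alpha n r a)) (1 : ℚ)
          else 0) := by
  classical
  have hV : superVandermonde n r a =
      ∑ w : Equiv.Perm (Fin n), ((Equiv.Perm.sign w : ℤ) : ℚ) •
        permAct w (sMono (alpha n r a) (T0 n r)) := rfl
  rw [hV, Finset.sum_apply]
  refine Finset.sum_congr rfl fun w _ => ?_
  rw [Pi.smul_apply]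
  congr 1
  show ((-1 : ℚ) ^ (((U.image ⇑w.symm ×ˢ U.image ⇑w.symm).filter
      (fun p => p.1 < p.2 ∧ w p.2 < w p.1)).card)) •
    MvPolynomial.rename ⇑w (sMono (alpha n r a) (T0 n r) (U.image ⇑w.symm)) = _
  by_cases h : U.image ⇑w.symm = T0 n r
  · rw [if_pos h, h]
    rw [show sMono (alpha n r a) (T0 n r) (T0 n r) = monomial (alpha n r a) 1 from
      if_pos rfl]
    rw [MvPolynomial.rename_monomial]
  · rw [if_neg h]
    rw [show sMono (alpha n r a) (T0 n r) (U.image ⇑w.symm) = 0 from if_neg h]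
    rw [map_zero, smul_zero]

lemma sum_neg_of_involution {M : Type*} [AddCommGroup M] [Module ℚ M] {G : Type*} [Group G]
    [Fintype G] (f : G → M) (τ : G) (key : ∀ w, f (w * τ) = - f w) : ∑ w, f w = 0 := by
  have hre : ∑ w, f (w * τ) = ∑ w, f w := by
    have := Equiv.sum_comp (Equiv.mulRight τ) f
    simpa [Equiv.coe_mulRight] using this
  have h2 : ∑ w, f w = - ∑ w, f w := by
    calc ∑ w, f w = ∑ w, f (w * τ) := hre.symm
    _ = ∑ w, - f w := Finset.sum_congr rfl fun w _ => key w
    _ = - ∑ w, f w := Finset.sum_neg_distrib f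
  have h3 : (2 : ℚ) • (∑ w, f w) = 0 := by
    rw [two_smul]
    nth_rewrite 2 [h2]
    exact add_neg_cancel _
  rcases smul_eq_zero.mp h3 with h | h
  · norm_num at h
  · exact h

lemma sum_perm_eq_zero (n r : ℕ) (γ : Fin n →₀ ℕ) (c : ℚ) (U : Finset (Fin n))
    (p q : Fin n) (hpq : p ≠ q) (hp : ¬ (p : ℕ) < r) (hq : ¬ (q : ℕ) < r) (hγ : γ p = γ q) :
    (∑ w : Equiv.Perm (Fin n),
      ((Equiv.Perm.sign w : ℤ) : ℚ) •
        (if U.image ⇑w.symm = T0 n r then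
          ((-1 : ℚ) ^ (((T0 n r ×ˢ T0 n r).filter
              (fun pr => pr.1 < pr.2 ∧ w pr.2 < w pr.1)).card)) •
            (c • MvPolynomial.monomial (Finsupp.mapDomain ⇑w γ) (1 : ℚ))
        else 0)) = 0 := by
  classical
  apply sum_neg_of_involution _ (Equiv.swap p q)
  intro w
  have hτfix : ∀ x : Fin n, (x : ℕ) < r → Equiv.swap p q x = x := fun x hx =>
    Equiv.swap_apply_of_ne_of_ne (by rintro rfl; omega) (by rintro rfl; omega)
  have hmulsymm : ∀ x, (w * Equiv.swap p q).symm x = Equiv.swap p q (w.symm x) := by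
    intro x
    rw [Equiv.Perm.mul_def, Equiv.symm_trans_apply, Equiv.symm_swap]
  have hγτ : ∀ x, γ (Equiv.swap p q x) = γ x := by
    intro x
    rcases eq_or_ne x p with rfl | hxp
    · rw [Equiv.swap_apply_left]; exact hγ.symm
    rcases eq_or_ne x q with rfl | hxq
    · rw [Equiv.swap_apply_right]; exact hγ
    · rw [Equiv.swap_apply_of_ne_of_ne hxp hxq]
  have hT0img : (T0 n r).image ⇑(Equiv.swap p q) = T0 n r := by
    rw [Finset.image_congr (g := id) (fun x hx => hτfix x (mem_T0.mp hx)), Finset.image_id]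
  have hcomp : ⇑(Equiv.swap p q) ∘ ⇑(Equiv.swap p q) = id :=
    funext fun x => Equiv.swap_apply_self p q x
  have hcond : (U.image ⇑(w * Equiv.swap p q).symm = T0 n r) ↔ (U.image ⇑w.symm = T0 n r) := by
    have himg : U.image ⇑(w * Equiv.swap p q).symm = (U.image ⇑w.symm).image ⇑(Equiv.swap p q) := by
      rw [Finset.image_image]
      exact Finset.image_congr fun x _ => hmulsymm x
    rw [himg]
    constructor
    · intro h
      have := congrArg (Finset.image ⇑(Equiv.swap p q)) h
      rwa [Finset.image_image, hcomp, Finset.image_id, hT0img] at this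
    · intro h
      rw [h, hT0img]
  have hsign : (((Equiv.Perm.sign (w * Equiv.swap p q) : ℤ)) : ℚ) =
      -(((Equiv.Perm.sign w : ℤ)) : ℚ) := by
    rw [Equiv.Perm.sign_mul, Equiv.Perm.sign_swap hpq]
    push_cast
    ring
  by_cases h : U.image ⇑w.symm = T0 n r
  · rw [if_pos (hcond.mpr h), if_pos h, hsign]
    have hinv : ((T0 n r ×ˢ T0 n r).filter
          (fun pr => pr.1 < pr.2 ∧ (w * Equiv.swap p q) pr.2 < (w * Equiv.swap p q) pr.1)).card =
        ((T0 n r ×ˢ T0 n r).filter (fun pr => pr.1 < pr.2 ∧ w pr.2 < w pr.1)).card := by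
      congr 1
      refine Finset.filter_congr fun pr hpr => ?_
      have h1 := (Finset.mem_product.mp hpr).1
      have h2 := (Finset.mem_product.mp hpr).2
      rw [Equiv.Perm.mul_apply, Equiv.Perm.mul_apply, hτfix _ (mem_T0.mp h1),
        hτfix _ (mem_T0.mp h2)]
    have hmap : Finsupp.mapDomain ⇑(w * Equiv.swap p q) γ = Finsupp.mapDomain ⇑w γ := by
      ext i
      rw [Finsupp.mapDomain_equiv_apply, Finsupp.mapDomain_equiv_apply, hmulsymm, hγτ]
    rw [hinv, hmap, neg_smul]
  · rw [if_neg (fun hc => h (hcond.mp hc)), if_neg h, smul_zero, smul_zero, neg_zero]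

lemma exists_pair (n r d : ℕ) (hrd : r < d) (a : Fin r → ℕ)
    (S : Finset (Fin n)) (hS : S.card = d)
    (hall : ∀ i ∈ S, alpha n r a i ≠ 0) :
    ∃ p q : Fin n, p ≠ q ∧ ¬ (p : ℕ) < r ∧ ¬ (q : ℕ) < r ∧
      (alpha n r a - AS S) p = (alpha n r a - AS S) q := by
  classical
  set D := S.filter (fun i : Fin n => r ≤ (i : ℕ)) with hD_def
  have hD : D.Nonempty := by
    by_contra h
    rw [Finset.not_nonempty_iff_eq_empty] at h
    have hsub : ∀ i ∈ S, (i : ℕ) < r := by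
      intro i hi
      by_contra hir
      have : i ∈ D := Finset.mem_filter.mpr ⟨hi, by omega⟩
      rw [h] at this
      exact absurd this (Finset.notMem_empty i)
    have hle : S.card ≤ (Finset.range r).card :=
      Finset.card_le_card_of_injOn (fun i => (i : ℕ))
        (fun i hi => Finset.mem_range.mpr (hsub i hi))
        (fun i _ j _ h => Fin.ext h)
    rw [Finset.card_range, hS] at hle
    omega
  set p := D.max' hD with hp_def
  have hpD : p ∈ D := D.max'_mem hD
  have hpS : p ∈ S := (Finset.mem_filter.mp hpD).1
  have hpr : r ≤ (p : ℕ) := (Finset.mem_filter.mp hpD).2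
  have hαp : alpha n r a p = n - 1 - (p : ℕ) := by
    rw [alpha_apply, dif_neg (by omega)]
  have hp0 : alpha n r a p ≠ 0 := hall p hpS
  have hplt : (p : ℕ) + 1 < n := by
    have := p.isLt
    rw [hαp] at hp0
    omega
  set q : Fin n := ⟨(p : ℕ) + 1, hplt⟩ with hq_def
  have hqval : (q : ℕ) = (p : ℕ) + 1 := rfl
  have hqS : q ∉ S := by
    intro hqS
    have hqD : q ∈ D := Finset.mem_filter.mpr ⟨hqS, by omega⟩
    have hle : q ≤ p := D.le_max' q hqD
    rw [Fin.le_def] at hle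
    omega
  refine ⟨p, q, ?_, by omega, by omega, ?_⟩
  · intro h
    have : (p : ℕ) = (q : ℕ) := by rw [h]
    omega
  · have hαq : alpha n r a q = n - 1 - ((p : ℕ) + 1) := by
      rw [alpha_apply, dif_neg (by omega)]
    rw [Finsupp.tsub_apply, Finsupp.tsub_apply, AS_apply, AS_apply, if_pos hpS, if_neg hqS,
      hαp, hαq]
    omega

end SuperVanAux


open SuperVanAux

/-- Lemma 3.2: for `n = k + r` and any sequence `a` of `r` nonnegative
integers, the elementary symmetric polynomial `e_d` annihilates `Δ_n(a)` for `n - k < d ≤ n`. -/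
theorem elementarySymmetric_annihilates_superVandermonde
    (n k r : ℕ) (hn : n = k + r) (a : Fin r → ℕ) (d : ℕ)
    (hd1 : n - k < d) (hd2 : d ≤ n) :
    pAct (MvPolynomial.esymm (Fin n) ℚ d) (superVandermonde n r a) = 0 := by
  classical
  have hr : r < d := by omega
  funext U
  show diffOp (MvPolynomial.esymm (Fin n) ℚ d) (superVandermonde n r a U) = 0
  rw [vandermonde_apply, diffOp_sum_right]
  have hstep : ∀ w : Equiv.Perm (Fin n),
      diffOp (MvPolynomial.esymm (Fin n) ℚ d)
        (((Equiv.Perm.sign w : ℤ) : ℚ) •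
          (if U.image ⇑w.symm = T0 n r then
            ((-1 : ℚ) ^ (((T0 n r ×ˢ T0 n r).filter
                (fun pr => pr.1 < pr.2 ∧ w pr.2 < w pr.1)).card)) •
              MvPolynomial.monomial (Finsupp.mapDomain ⇑w (alpha n r a)) (1 : ℚ)
          else 0)) =
      ∑ S ∈ Finset.powersetCard d (Finset.univ : Finset (Fin n)),
        ((Equiv.Perm.sign w : ℤ) : ℚ) •
          (if U.image ⇑w.symm = T0 n r then
            ((-1 : ℚ) ^ (((T0 n r ×ˢ T0 n r).filter
                (fun pr => pr.1 < pr.2 ∧ w pr.2 < w pr.1)).card)) •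
              ((∏ i : Fin n, (((alpha n r a) i).descFactorial (AS S i) : ℚ)) •
                MvPolynomial.monomial
                  (Finsupp.mapDomain ⇑w (alpha n r a - AS S)) (1 : ℚ))
          else 0) := by
    intro w
    rw [diffOp_smul_right]
    by_cases h : U.image ⇑w.symm = T0 n r
    · rw [if_pos h, diffOp_smul_right, diffOp_esymm,
        sum_powersetCard_image d w
          (fun S => diffOp (MvPolynomial.monomial (AS S) 1)
            (MvPolynomial.monomial (Finsupp.mapDomain ⇑w (alpha n r a)) 1)),
        Finset.smul_sum, Finset.smul_sum]
      refine Finset.sum_congr rfl fun S _ => ?_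
      rw [if_pos h, AS_image, diffOp_monomial_monomial, prod_desc_mapDomain, mapDomain_tsub]
    · rw [if_neg h, diffOp_zero_right, smul_zero]
      exact (Finset.sum_eq_zero fun S _ => by rw [if_neg h, smul_zero]).symm
  refine (Finset.sum_congr rfl fun w _ => hstep w).trans ?_
  rw [Finset.sum_comm]
  refine Finset.sum_eq_zero fun S hS => ?_
  by_cases hC : (∏ i : Fin n, (((alpha n r a) i).descFactorial (AS S i) : ℚ)) = 0
  · refine Finset.sum_eq_zero fun w _ => ?_
    rw [hC, zero_smul, smul_zero, ite_self, smul_zero]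
  · have hall : ∀ i ∈ S, alpha n r a i ≠ 0 := by
      intro i hi h0
      apply Finset.prod_ne_zero_iff.mp hC i (Finset.mem_univ i)
      rw [AS_apply, if_pos hi, Nat.descFactorial_one, h0]
      norm_num
    obtain ⟨p, q, hpq, hp, hq, hγ⟩ :=
      exists_pair n r d hr a S (Finset.mem_powersetCard_univ.mp hS) hall
    exact sum_perm_eq_zero n r (alpha n r a - AS S) _ U p q hpq hp hq hγ
end

section
/- Let f, g, f', g' be θ-homogeneous superpolynomials of θ-degrees r, s, r', s' respectively. Then ⟨f, (f'·g')·g⟩ = ± ⟨f·g, f'·g'⟩, where the sign depends only on the θ-degrees r, s, r', s'; explicitly, whenever both sides are nonzero the sign equals (−1)^{C(s,2) + C(r,2) + C(s−r,2)} with C(m,2) = m(m−1)/2. -/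
open MvPolynomial

open Finset in
lemma coeff_diffOp {n : ℕ} (p q : MvPolynomial (Fin n) ℚ) (m : Fin n →₀ ℕ) :
    MvPolynomial.coeff m (diffOp p q) = ∑ a ∈ p.support,
      p.coeff a * q.coeff (m + a) *
        ∏ i : Fin n, (((m + a) i).descFactorial (a i) : ℚ) := by
  unfold diffOp
  rw [MvPolynomial.coeff_sum]
  refine Finset.sum_congr rfl fun a _ => ?_
  rw [MvPolynomial.coeff_sum]
  rw [Finset.sum_eq_single (m + a)]
  · simp [MvPolynomial.coeff_smul, MvPolynomial.coeff_monomial, add_tsub_cancel_right]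
  · intro b _ hb
    by_cases hab : a ≤ b
    · have : b - a ≠ m := by
        intro h
        apply hb
        rw [← h, tsub_add_cancel_of_le hab]
      simp [MvPolynomial.coeff_smul, MvPolynomial.coeff_monomial, this]
    · obtain ⟨i, hi⟩ : ∃ i, b i < a i := by
        by_contra h
        push_neg at h
        exact hab fun i => h i
      have : ((b i).descFactorial (a i) : ℚ) = 0 := by
        rw [Nat.descFactorial_eq_zero_iff_lt.mpr hi]; norm_num
      rw [Finset.prod_eq_zero (Finset.mem_univ i) this]
      simp
  · intro h
    rw [MvPolynomial.notMem_support_iff.mp h]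
    simp

noncomputable def cdiff {n : ℕ} (p q : MvPolynomial (Fin n) ℚ) : ℚ :=
  MvPolynomial.constantCoeff (diffOp p q)

lemma cdiff_eq {n : ℕ} (p q : MvPolynomial (Fin n) ℚ) :
    cdiff p q = ∑ a ∈ p.support,
      p.coeff a * q.coeff a * ∏ i : Fin n, ((a i).factorial : ℚ) := by
  rw [cdiff, MvPolynomial.constantCoeff_eq]
  show MvPolynomial.coeff 0 (diffOp p q) = _
  rw [coeff_diffOp]
  refine Finset.sum_congr rfl fun a _ => ?_
  simp [Nat.descFactorial_self]

lemma cdiff_zero_right {n : ℕ} (p : MvPolynomial (Fin n) ℚ) : cdiff p 0 = 0 := by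
  simp [cdiff_eq]

lemma diffOp_zero_left {n : ℕ} (q : MvPolynomial (Fin n) ℚ) : diffOp 0 q = 0 := by
  unfold diffOp; simp

lemma diffOp_zero_right {n : ℕ} (p : MvPolynomial (Fin n) ℚ) : diffOp p 0 = 0 := by
  unfold diffOp; simp

lemma cdiff_symm {n : ℕ} (p q : MvPolynomial (Fin n) ℚ) : cdiff p q = cdiff q p := by
  rw [cdiff_eq, cdiff_eq]
  rw [Finset.sum_subset (Finset.subset_union_left (s₂ := q.support))]
  rw [Finset.sum_subset (Finset.subset_union_left (s₂ := p.support) (s₁ := q.support))]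
  · rw [Finset.union_comm]
    exact Finset.sum_congr rfl fun a _ => by ring
  · intro a _ ha
    rw [MvPolynomial.notMem_support_iff.mp ha]; ring
  · intro a _ ha
    rw [MvPolynomial.notMem_support_iff.mp ha]; ring

lemma cdiff_smul_right {n : ℕ} (c : ℚ) (p q : MvPolynomial (Fin n) ℚ) :
    cdiff p (c • q) = c * cdiff p q := by
  simp only [cdiff_eq, MvPolynomial.coeff_smul, Finset.mul_sum, smul_eq_mul]
  exact Finset.sum_congr rfl fun a _ => by ring

lemma cdiff_sum_right {n : ℕ} {ι : Type*} (s : Finset ι) (p : MvPolynomial (Fin n) ℚ)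
    (Q : ι → MvPolynomial (Fin n) ℚ) :
    cdiff p (∑ i ∈ s, Q i) = ∑ i ∈ s, cdiff p (Q i) := by
  simp only [cdiff_eq, MvPolynomial.coeff_sum, Finset.mul_sum, Finset.sum_mul]
  rw [Finset.sum_comm]

lemma descFactorial_mul_factorial (a b : ℕ) :
    (a + b).descFactorial b * a.factorial = (a + b).factorial := by
  induction b with
  | zero => simp
  | succ b ih =>
      rw [show a + (b + 1) = (a + b) + 1 from rfl, Nat.succ_descFactorial_succ,
        Nat.factorial_succ, mul_assoc, ih]

lemma cdiff_diffOp {n : ℕ} (p q t : MvPolynomial (Fin n) ℚ) :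
    cdiff p (diffOp q t) = ∑ a ∈ p.support, ∑ b ∈ q.support,
      p.coeff a * q.coeff b * t.coeff (a + b) *
        ∏ i : Fin n, ((a i + b i).factorial : ℚ) := by
  rw [cdiff_eq]
  refine Finset.sum_congr rfl fun a _ => ?_
  rw [coeff_diffOp, Finset.mul_sum, Finset.sum_mul]
  refine Finset.sum_congr rfl fun b _ => ?_
  have hprod : (∏ i : Fin n, (((a + b) i).descFactorial (b i) : ℚ)) *
      (∏ i : Fin n, ((a i).factorial : ℚ)) = ∏ i : Fin n, ((a i + b i).factorial : ℚ) := by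
    rw [← Finset.prod_mul_distrib]
    refine Finset.prod_congr rfl fun i _ => ?_
    rw [Finsupp.add_apply]
    exact_mod_cast congrArg Nat.cast (descFactorial_mul_factorial (a i) (b i))
  rw [← hprod]
  ring

lemma cdiff_diffOp_symm {n : ℕ} (p q t : MvPolynomial (Fin n) ℚ) :
    cdiff p (diffOp q t) = cdiff q (diffOp p t) := by
  rw [cdiff_diffOp, cdiff_diffOp, Finset.sum_comm]
  refine Finset.sum_congr rfl fun b _ => Finset.sum_congr rfl fun a _ => ?_
  rw [add_comm b a]
  have : ∀ i : Fin n, b i + a i = a i + b i := fun i => Nat.add_comm _ _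
  simp only [this]
  ring

lemma cdiff_diffOp_smul {n : ℕ} (c : ℚ) (p q t : MvPolynomial (Fin n) ℚ) :
    cdiff p (diffOp q (c • t)) = c * cdiff p (diffOp q t) := by
  rw [cdiff_diffOp, cdiff_diffOp, Finset.mul_sum]
  refine Finset.sum_congr rfl fun a _ => ?_
  rw [Finset.mul_sum]
  refine Finset.sum_congr rfl fun b _ => ?_
  rw [MvPolynomial.coeff_smul, smul_eq_mul]
  ring

def Ncount {n : ℕ} (S T : Finset (Fin n)) : ℕ :=
  ∑ t ∈ T, (S.filter (fun j => j < t)).card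

lemma tdl_eval_list {n : ℕ} (l : List (Fin n)) (hl : l.Pairwise (· < ·)) (F : Superspace n)
    (S : Finset (Fin n)) :
    thetaDerivList l F S =
      if Disjoint l.toFinset S then
        ((-1 : ℚ) ^ (Ncount S l.toFinset + l.length.choose 2)) • F (l.toFinset ∪ S)
      else 0 := by
  induction l generalizing S with
  | nil =>
      simp [thetaDerivList, Ncount]
  | cons i l ih =>
      rw [List.pairwise_cons] at hl
      have hil : ∀ j ∈ l.toFinset, i < j := fun j hj => hl.1 j (List.mem_toFinset.mp hj)
      have hinot : i ∉ l.toFinset := fun h => lt_irrefl i (hil i h)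
      have hnodup : l.toFinset.card = l.length := by
        rw [List.toFinset_card_of_nodup hl.2.nodup]
      have step : thetaDerivList (i :: l) F S = thetaDeriv i (thetaDerivList l F) S := rfl
      rw [step, thetaDeriv]
      by_cases hiS : i ∈ S
      · rw [if_pos hiS, if_neg]
        rw [List.toFinset_cons, Finset.disjoint_left]
        intro h
        exact h (Finset.mem_insert_self i _) hiS
      · rw [if_neg hiS, ih hl.2]
        by_cases hd : Disjoint l.toFinset S
        · have hd' : Disjoint l.toFinset (insert i S) := by
            rw [Finset.disjoint_insert_right]
            exact ⟨hinot, hd⟩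
          have hd'' : Disjoint (i :: l).toFinset S := by
            rw [List.toFinset_cons, Finset.disjoint_insert_left]
            exact ⟨hiS, hd⟩
          rw [if_pos hd', if_pos hd'']
          have hA1 : Ncount (insert i S) l.toFinset = Ncount S l.toFinset + l.length := by
            unfold Ncount
            rw [← hnodup, Finset.card_eq_sum_ones l.toFinset, ← Finset.sum_add_distrib]
            refine Finset.sum_congr rfl fun t ht => ?_
            rw [Finset.filter_insert, if_pos (hil t ht),
              Finset.card_insert_of_notMem (fun h => hiS (Finset.mem_of_mem_filter i h))]
          have hA2 : Ncount S (i :: l).toFinset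
              = (S.filter (fun j => j < i)).card + Ncount S l.toFinset := by
            rw [List.toFinset_cons]
            exact Finset.sum_insert hinot
          have hA3 : (i :: l).length.choose 2 = l.length + l.length.choose 2 := by
            show (l.length + 1).choose 2 = _
            rw [Nat.choose_succ_succ, Nat.choose_one_right]
          have hset : l.toFinset ∪ insert i S = (i :: l).toFinset ∪ S := by
            rw [List.toFinset_cons, Finset.union_insert, Finset.insert_union]
          rw [hset, smul_smul, ← pow_add]
          congr 2
          rw [hA1, hA2, hA3]
          ring
        · have hd2 : ¬ Disjoint l.toFinset (insert i S) := by
            rw [Finset.disjoint_insert_right]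
            exact fun h => hd h.2
          have hd3 : ¬ Disjoint (i :: l).toFinset S := by
            rw [List.toFinset_cons, Finset.disjoint_insert_left]
            exact fun h => hd h.2
          rw [if_neg hd2, if_neg hd3, smul_zero]

lemma tdl_eval {n : ℕ} (T : Finset (Fin n)) (F : Superspace n) (S : Finset (Fin n)) :
    thetaDerivList (T.sort (· ≤ ·)) F S =
      if Disjoint T S then
        ((-1 : ℚ) ^ (Ncount S T + T.card.choose 2)) • F (T ∪ S)
      else 0 := by
  have h := tdl_eval_list (T.sort (· ≤ ·)) (Finset.sortedLT_sort T).pairwise F S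
  rwa [Finset.sort_toFinset, Finset.length_sort] at h

lemma superPairing_eq {n : ℕ} (f h : Superspace n) :
    superPairing f h = ∑ T : Finset (Fin n),
      (-1 : ℚ) ^ T.card.choose 2 * cdiff (f T) (h T) := by
  unfold superPairing superAct
  rw [Finset.sum_apply, map_sum]
  refine Finset.sum_congr rfl fun T _ => ?_
  rw [tdl_eval, if_pos (Finset.disjoint_empty_right T)]
  have hN : Ncount (∅ : Finset (Fin n)) T = 0 := by
    unfold Ncount; simp
  rw [hN, Finset.union_empty, zero_add]
  exact cdiff_smul_right _ _ _

lemma Ncount_add_Ncount {n : ℕ} (A C : Finset (Fin n)) (hd : Disjoint A C) :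
    Ncount A C + Ncount C A = A.card * C.card := by
  unfold Ncount
  simp only [Finset.card_filter]
  rw [Finset.sum_comm (s := A) (t := C)]
  rw [← Finset.sum_add_distrib]
  have key : ∀ x ∈ C, ((∑ i ∈ A, if i < x then 1 else 0)
      + ∑ i ∈ A, if x < i then 1 else 0) = A.card := by
    intro x hx
    rw [← Finset.sum_add_distrib, Finset.card_eq_sum_ones]
    refine Finset.sum_congr rfl fun i hi => ?_
    have hne : i ≠ x := fun h => (Finset.disjoint_left.mp hd hi) (h ▸ hx)
    rcases lt_or_gt_of_ne hne with h | h
    · rw [if_pos h, if_neg (asymm h)]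
    · rw [if_neg (asymm h), if_pos h]
  rw [Finset.sum_congr rfl key, Finset.sum_const, smul_eq_mul, mul_comm]

lemma choose2_add (a b : ℕ) : (a + b).choose 2 = a.choose 2 + b.choose 2 + a * b := by
  induction b with
  | zero => simp
  | succ b ih =>
      have h1 : (a + (b + 1)) = (a + b) + 1 := rfl
      rw [h1, Nat.choose_succ_succ, Nat.choose_one_right, ih,
        Nat.choose_succ_succ b 1, Nat.choose_one_right]
      ring

lemma neg_one_pow_congr' {a b : ℕ} (h : a % 2 = b % 2) : (-1 : ℚ) ^ a = (-1 : ℚ) ^ b := by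
  conv_lhs => rw [← Nat.div_add_mod a 2]
  conv_rhs => rw [← Nat.div_add_mod b 2]
  rw [pow_add, pow_add, pow_mul, pow_mul]
  norm_num [h]

/-- Lemma 5.3(2): for `θ`-homogeneous `f, g, f', g'` of `θ`-degrees
`r, s, r', s'`, one has `⟨f, (f'·g')·g⟩ = ± ⟨f·g, f'·g'⟩`, the sign being
`(-1)^{C(s,2) + C(r,2) + C(s-r,2)}`. -/
theorem superPairing_adjoint_sign (n : ℕ) (r s r' s' : ℕ) (f g f' g' : Superspace n)
    (hf : isThetaHomog r f) (hg : isThetaHomog s g)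
    (hf' : isThetaHomog r' f') (hg' : isThetaHomog s' g') :
    superPairing f (superAct (superAct f' g') g) =
      (-1 : ℚ) ^ (s.choose 2 + r.choose 2 + (s - r).choose 2) *
        superPairing (superAct f g) (superAct f' g') := by
  classical
  set X := superAct f' g' with hX
  set e := s.choose 2 + r.choose 2 + (s - r).choose 2 with he
  have happly : ∀ (u v : Superspace n) (A : Finset (Fin n)),
      superAct u v A = ∑ C : Finset (Fin n),
        diffOp (u C) (thetaDerivList (C.sort (· ≤ ·)) v A) := by
    intro u v A
    unfold superAct
    rw [Finset.sum_apply]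
  have main : ∀ A C : Finset (Fin n),
      (-1 : ℚ) ^ A.card.choose 2 *
          cdiff (f A) (diffOp (X C) (thetaDerivList (C.sort (· ≤ ·)) g A))
        = (-1 : ℚ) ^ e * ((-1 : ℚ) ^ C.card.choose 2 *
          cdiff (X C) (diffOp (f A) (thetaDerivList (A.sort (· ≤ ·)) g C))) := by
    intro A C
    by_cases hd : Disjoint A C
    · rw [tdl_eval, tdl_eval, if_pos hd.symm, if_pos hd, Finset.union_comm C A,
        cdiff_diffOp_smul, cdiff_diffOp_smul, cdiff_diffOp_symm (f A) (X C)]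
      set K := cdiff (X C) (diffOp (f A) (g (A ∪ C))) with hK
      by_cases hK0 : K = 0
      · rw [hK0]; ring
      · have hfA : f A ≠ 0 := by
          intro h0; exact hK0 (by rw [hK, h0, diffOp_zero_left, cdiff_zero_right])
        have hg0 : g (A ∪ C) ≠ 0 := by
          intro h0; exact hK0 (by rw [hK, h0, diffOp_zero_right, cdiff_zero_right])
        have hA : A.card = r := by
          by_contra h; exact hfA (hf A h)
        have hs : (A ∪ C).card = s := by
          by_contra h; exact hg0 (hg _ h)
        have hcard : r + C.card = s := by
          rw [← hA, ← hs, Finset.card_union_of_disjoint hd]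
        have hC : C.card = s - r := by omega
        have hNN := Ncount_add_Ncount A C hd
        have hch := choose2_add r (s - r)
        have hs' : r + (s - r) = s := by omega
        rw [hs'] at hch
        rw [hA, hC] at hNN
        obtain ⟨m, hm⟩ : ∃ m, r * (s - r) = m := ⟨_, rfl⟩
        rw [hm] at hNN hch
        have hE : (-1 : ℚ) ^ A.card.choose 2 * (-1 : ℚ) ^ (Ncount A C + C.card.choose 2)
            = (-1 : ℚ) ^ e * ((-1 : ℚ) ^ C.card.choose 2 *
              (-1 : ℚ) ^ (Ncount C A + A.card.choose 2)) := by
          rw [← pow_add, ← pow_add, ← pow_add, hA, hC, he]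
          apply neg_one_pow_congr'
          omega
        linear_combination K * hE
    · rw [tdl_eval, tdl_eval, if_neg (fun h => hd h.symm), if_neg hd,
        diffOp_zero_right, diffOp_zero_right]
      simp [cdiff_zero_right]
  rw [superPairing_eq, superPairing_eq, Finset.mul_sum]
  have lhs_eq : ∀ A : Finset (Fin n),
      (-1 : ℚ) ^ A.card.choose 2 * cdiff (f A) (superAct X g A)
        = ∑ C : Finset (Fin n), (-1 : ℚ) ^ A.card.choose 2 *
            cdiff (f A) (diffOp (X C) (thetaDerivList (C.sort (· ≤ ·)) g A)) := by
    intro A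
    rw [happly, cdiff_sum_right, Finset.mul_sum]
  have rhs_eq : ∀ C : Finset (Fin n),
      (-1 : ℚ) ^ e * ((-1 : ℚ) ^ C.card.choose 2 * cdiff (superAct f g C) (X C))
        = ∑ A : Finset (Fin n), (-1 : ℚ) ^ e * ((-1 : ℚ) ^ C.card.choose 2 *
            cdiff (X C) (diffOp (f A) (thetaDerivList (A.sort (· ≤ ·)) g C))) := by
    intro C
    rw [cdiff_symm, happly, cdiff_sum_right, Finset.mul_sum, Finset.mul_sum]
  calc (∑ A : Finset (Fin n), (-1 : ℚ) ^ A.card.choose 2 * cdiff (f A) (superAct X g A))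
      = ∑ A : Finset (Fin n), ∑ C : Finset (Fin n), (-1 : ℚ) ^ A.card.choose 2 *
          cdiff (f A) (diffOp (X C) (thetaDerivList (C.sort (· ≤ ·)) g A)) :=
        Finset.sum_congr rfl fun A _ => lhs_eq A
    _ = ∑ A : Finset (Fin n), ∑ C : Finset (Fin n), (-1 : ℚ) ^ e *
          ((-1 : ℚ) ^ C.card.choose 2 *
            cdiff (X C) (diffOp (f A) (thetaDerivList (A.sort (· ≤ ·)) g C))) :=
        Finset.sum_congr rfl fun A _ => Finset.sum_congr rfl fun C _ => main A C
    _ = ∑ C : Finset (Fin n), ∑ A : Finset (Fin n), (-1 : ℚ) ^ e *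
          ((-1 : ℚ) ^ C.card.choose 2 *
            cdiff (X C) (diffOp (f A) (thetaDerivList (A.sort (· ≤ ·)) g C))) :=
        Finset.sum_comm
    _ = ∑ C : Finset (Fin n), (-1 : ℚ) ^ e *
          ((-1 : ℚ) ^ C.card.choose 2 * cdiff (superAct f g C) (X C)) :=
        (Finset.sum_congr rfl fun C _ => (rhs_eq C).symm)
end
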